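/- Let (X, Y) ∈ gph N_{S₊ⁿ} (i.e., X ⪰ 0, Y ⪯ 0, ⟨X, Y⟩ = 0), and let P be an orthogonal matrix diagonalizing X + Y with eigenvalues in nonincreasing order; set α = {i : λ_i(X+Y) > 0}, β = {i : λ_i(X+Y) = 0}, γ = {i : λ_i(X+Y) < 0}. Then the affine hull of the critical cone of the indicator δ_{S₊ⁿ} at X for Y is aff C_{S₊ⁿ}(X, Y) = {H ∈ Sⁿ : P_βᵀ H P_γ = 0 and P_γᵀ H P_γ = 0}. -/

import Mathlib

/- STATEMENT 16: for (X,Y) ∈ gph N_{S₊ⁿ} with X+Y = P Diag(d) Pᵀ, d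
nonincreasing, and index sets β = {d=0}, γ = {d<0}, the affine hull of the
critical cone C_{S₊ⁿ}(X,Y) = T_{S₊ⁿ}(X) ∩ Y⊥ is
{H ∈ Sⁿ : P_βᵀ H P_γ = 0 and P_γᵀ H P_γ = 0}. -/

open Classical Matrix Filter Topology

noncomputable section

abbrev Mat (n : ℕ) := Matrix (Fin n) (Fin n) ℝ

/-- Tangent cone (to a convex set) at a point: closure of the feasible-direction cone. -/
def TangentConeAt {n : ℕ} (S : Set (Mat n)) (x : Mat n) : Set (Mat n) :=
  closure {h | ∃ t : ℝ, 0 < t ∧ ∃ s ∈ S, h = t • (s - x)}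

/-- Critical cone of δ_{S₊ⁿ} at X for Y: T_{S₊ⁿ}(X) ∩ Y⊥. -/
def CritSDP {n : ℕ} (X Y : Mat n) : Set (Mat n) :=
  {H | H ∈ TangentConeAt {A : Mat n | A.PosSemidef} X ∧ (H * Y).trace = 0}

lemma qf_diag {n : ℕ} (f v : Fin n → ℝ) :
    v ⬝ᵥ (Matrix.diagonal f *ᵥ v) = ∑ i, f i * v i ^ 2 := by
  simp [dotProduct, Matrix.mulVec_diagonal]
  exact Finset.sum_congr rfl fun i _ => by ring

lemma qf_std {n : ℕ} (i j : Fin n) (c : ℝ) (v : Fin n → ℝ) :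
    v ⬝ᵥ (Matrix.single i j c *ᵥ v) = c * v i * v j := by
  simp only [dotProduct, Matrix.mulVec, Matrix.single, Matrix.of_apply,
    Finset.mul_sum]
  rw [Finset.sum_eq_single i]
  · rw [Finset.sum_eq_single j]
    · simp; ring
    · intro b _ hb; simp [hb.symm]
    · simp
  · intro b _ hb
    rw [Finset.sum_eq_zero]
    intro k _
    simp [Ne.symm hb]
  · simp

lemma qf_single {n : ℕ} (M : Mat n) (i : Fin n) :
    (Pi.single i 1 : Fin n → ℝ) ⬝ᵥ (M *ᵥ Pi.single i 1) = M i i := by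
  simp [dotProduct, Matrix.mulVec_single, Pi.single_apply]

lemma conjT_eq_transpose {n : ℕ} (M : Mat n) : Mᴴ = Mᵀ := by
  ext i j; simp [Matrix.conjTranspose_apply]

lemma trace_sq_zero {n : ℕ} (M : Mat n) (h : (Mᵀ * M).trace = 0) : M = 0 := by
  have : ∑ j, ∑ i, (M i j)^2 = 0 := by
    rw [← h]; simp [Matrix.trace, Matrix.diag, Matrix.mul_apply, sq]
  ext i j
  have h1 : ∀ j' ∈ Finset.univ, (0:ℝ) ≤ ∑ i, (M i j')^2 :=
    fun j' _ => Finset.sum_nonneg fun i _ => sq_nonneg _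
  have h2 := (Finset.sum_eq_zero_iff_of_nonneg h1).mp this j (Finset.mem_univ j)
  have h3 := (Finset.sum_eq_zero_iff_of_nonneg
    (fun i' _ => sq_nonneg (M i' j))).mp h2 i (Finset.mem_univ i)
  simpa using sq_eq_zero_iff.mp h3

open scoped MatrixOrder in
lemma psd_mul_eq_zero {n : ℕ} {A B : Mat n} (hA : A.PosSemidef) (hB : B.PosSemidef)
    (h : (A * B).trace = 0) : A * B = 0 := by
  set a := CFC.sqrt A
  set b := CFC.sqrt B
  have ha : a * a = A := CFC.sqrt_mul_sqrt_self A hA.nonneg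
  have hb : b * b = B := CFC.sqrt_mul_sqrt_self B hB.nonneg
  have has : aᵀ = a := by rw [← conjT_eq_transpose]; exact (CFC.sqrt_nonneg A).posSemidef.1
  have hbs : bᵀ = b := by rw [← conjT_eq_transpose]; exact (CFC.sqrt_nonneg B).posSemidef.1
  have key : ((a*b)ᵀ * (a*b)).trace = 0 := by
    rw [Matrix.transpose_mul, has, hbs, show b * a * (a * b) = b * (a * a * b) by
      noncomm_ring, Matrix.trace_mul_comm]
    rw [show a * a * b * b = A * B by rw [mul_assoc, hb, ha]] at *
    exact h
  have hz : a * b = 0 := trace_sq_zero _ key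
  calc A * B = a * (a * b) * b := by rw [← ha, ← hb]; noncomm_ring
  _ = 0 := by rw [hz]; simp

lemma trace_conj {n : ℕ} {P : Mat n} (h : P * Pᵀ = 1) (A : Mat n) :
    (Pᵀ * A * P).trace = A.trace := by
  rw [Matrix.mul_assoc, Matrix.trace_mul_comm, Matrix.mul_assoc, h, Matrix.mul_one]

lemma trace_conj' {n : ℕ} {P : Mat n} (h : Pᵀ * P = 1) (A : Mat n) :
    (P * A * Pᵀ).trace = A.trace := by
  rw [Matrix.mul_assoc, Matrix.trace_mul_comm, Matrix.mul_assoc, h, Matrix.mul_one]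

lemma decomp {n : ℕ} {X Y P : Mat n} {d : Fin n → ℝ}
    (hX : X.PosSemidef) (hY : (-Y).PosSemidef) (hXY : (X * Y).trace = 0)
    (hP : Pᵀ * P = 1) (hdec : X + Y = P * Matrix.diagonal d * Pᵀ) :
    X = P * Matrix.diagonal (fun i => max (d i) 0) * Pᵀ ∧
    Y = P * Matrix.diagonal (fun i => min (d i) 0) * Pᵀ := by
  have hPPt : P * Pᵀ = 1 := mul_eq_one_comm.mp hP
  set X' : Mat n := Pᵀ * X * P with hX'def
  set Y' : Mat n := Pᵀ * Y * P with hY'def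
  have hX' : X'.PosSemidef := by
    have := hX.conjTranspose_mul_mul_same P
    rwa [conjT_eq_transpose] at this
  have hY' : (-Y').PosSemidef := by
    have := hY.conjTranspose_mul_mul_same P
    rwa [conjT_eq_transpose, Matrix.mul_neg, Matrix.neg_mul] at this
  have hsum : X' + Y' = Matrix.diagonal d := by
    have e1 : Pᵀ * (X + Y) * P = X' + Y' := by
      rw [hX'def, hY'def]; noncomm_ring
    rw [← e1, hdec]
    calc Pᵀ * (P * Matrix.diagonal d * Pᵀ) * P
        = (Pᵀ * P) * Matrix.diagonal d * (Pᵀ * P) := by noncomm_ring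
      _ = Matrix.diagonal d := by rw [hP]; simp
  have hconj : X' * Y' = Pᵀ * (X * Y) * P := by
    calc X' * Y' = Pᵀ * X * (P * Pᵀ) * (Y * P) := by rw [hX'def, hY'def]; noncomm_ring
      _ = Pᵀ * (X * Y) * P := by rw [hPPt]; noncomm_ring
  have htr : (X' * Y').trace = 0 := by rw [hconj, trace_conj hPPt, hXY]
  have hXYz : X' * Y' = 0 := by
    have h0 : (X' * -Y').trace = 0 := by rw [Matrix.mul_neg, Matrix.trace_neg, htr, neg_zero]
    have := psd_mul_eq_zero hX' hY' h0
    rwa [Matrix.mul_neg, neg_eq_zero] at this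
  have hYXz : Y' * X' = 0 := by
    have h0 : ((-Y') * X').trace = 0 := by
      rw [Matrix.trace_mul_comm, Matrix.mul_neg, Matrix.trace_neg]
      rw [htr, neg_zero]
    have := psd_mul_eq_zero hY' hX' h0
    rwa [Matrix.neg_mul, neg_eq_zero] at this
  have hXsq : X' * X' = X' * Matrix.diagonal d := by
    rw [← hsum, Matrix.mul_add, hXYz, add_zero]
  have hYsq : Y' * Y' = Y' * Matrix.diagonal d := by
    rw [← hsum, Matrix.mul_add, hYXz, zero_add]
  have hXsymm : ∀ i k, X' k i = X' i k := fun i k => by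
    simpa using (hX'.1.apply k i).symm
  have hYsymm : ∀ i k, Y' k i = Y' i k := fun i k => by
    have := hY'.1.apply k i
    simp only [Matrix.neg_apply, star_trivial] at this
    linarith
  have hXdiag : ∀ i, 0 ≤ X' i i := fun i => by
    have := hX'.dotProduct_mulVec_nonneg (Pi.single i 1)
    simpa [qf_single] using this
  have hYdiag : ∀ i, Y' i i ≤ 0 := fun i => by
    have := hY'.dotProduct_mulVec_nonneg (Pi.single i 1)
    simp only [star_trivial, qf_single] at this
    simpa using this
  have rowzero_neg : ∀ i, d i ≤ 0 → ∀ k, X' i k = 0 := by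
    intro i hdi k
    have e : (X' * X') i i = (X' * Matrix.diagonal d) i i := by rw [hXsq]
    rw [Matrix.mul_apply, Matrix.mul_diagonal] at e
    have e2 : ∑ k, (X' i k)^2 = X' i i * d i := by
      rw [← e]; exact Finset.sum_congr rfl fun k _ => by rw [sq, hXsymm]
    have hle : ∑ k, (X' i k)^2 ≤ 0 := e2 ▸ mul_nonpos_of_nonneg_of_nonpos (hXdiag i) hdi
    have hz : ∑ k, (X' i k)^2 = 0 :=
      le_antisymm hle (Finset.sum_nonneg fun k _ => sq_nonneg _)
    have := (Finset.sum_eq_zero_iff_of_nonneg (fun k _ => sq_nonneg (X' i k))).mp hz k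
      (Finset.mem_univ k)
    exact pow_eq_zero_iff (by norm_num) |>.mp this
  have rowzero_pos : ∀ i, 0 < d i → ∀ k, Y' i k = 0 := by
    intro i hdi k
    have e : (Y' * Y') i i = (Y' * Matrix.diagonal d) i i := by rw [hYsq]
    rw [Matrix.mul_apply, Matrix.mul_diagonal] at e
    have e2 : ∑ k, (Y' i k)^2 = Y' i i * d i := by
      rw [← e]; exact Finset.sum_congr rfl fun k _ => by rw [sq, hYsymm]
    have hle : ∑ k, (Y' i k)^2 ≤ 0 := e2 ▸ mul_nonpos_of_nonpos_of_nonneg (hYdiag i) hdi.le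
    have hz : ∑ k, (Y' i k)^2 = 0 :=
      le_antisymm hle (Finset.sum_nonneg fun k _ => sq_nonneg _)
    have := (Finset.sum_eq_zero_iff_of_nonneg (fun k _ => sq_nonneg (Y' i k))).mp hz k
      (Finset.mem_univ k)
    exact pow_eq_zero_iff (by norm_num) |>.mp this
  have hentry : ∀ i j, X' i j + Y' i j = Matrix.diagonal d i j := fun i j => by
    rw [← hsum]; rfl
  have hX'eq : X' = Matrix.diagonal (fun i => max (d i) 0) := by
    ext i j
    rcases le_or_gt (d i) 0 with h | h
    · rw [rowzero_neg i h j, Matrix.diagonal_apply]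
      split
      · next hij => rw [max_eq_right h]
      · rfl
    · have hy := rowzero_pos i h j
      have := hentry i j
      rw [hy, add_zero] at this
      rw [this, Matrix.diagonal_apply, Matrix.diagonal_apply]
      split
      · rw [max_eq_left h.le]
      · rfl
  have hY'eq : Y' = Matrix.diagonal (fun i => min (d i) 0) := by
    ext i j
    rcases le_or_gt (d i) 0 with h | h
    · have hx := rowzero_neg i h j
      have := hentry i j
      rw [hx, zero_add] at this
      rw [this, Matrix.diagonal_apply, Matrix.diagonal_apply]
      split
      · rw [min_eq_left h]
      · rfl
    · rw [rowzero_pos i h j, Matrix.diagonal_apply]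
      split
      · next hij => rw [min_eq_right h.le]
      · rfl
  have back : ∀ A : Mat n, P * (Pᵀ * A * P) * Pᵀ = A := fun A => by
    calc P * (Pᵀ * A * P) * Pᵀ = (P * Pᵀ) * A * (P * Pᵀ) := by noncomm_ring
      _ = A := by rw [hPPt]; simp
  constructor
  · rw [← back X, hX'def.symm, hX'eq]
  · rw [← back Y, hY'def.symm, hY'eq]

def TanBound {n : ℕ} (P : Mat n) (d : Fin n → ℝ) : Set (Mat n) :=
  {H : Mat n | H.IsHermitian ∧ ∀ v : Fin n → ℝ, (∀ i, 0 < d i → v i = 0) →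
    0 ≤ v ⬝ᵥ ((Pᵀ * H * P) *ᵥ v)}

lemma isClosed_tanBound {n : ℕ} (P : Mat n) (d : Fin n → ℝ) :
    IsClosed (TanBound P d) := by
  have h1 : IsClosed {H : Mat n | H.IsHermitian} := by
    have : Continuous fun H : Mat n => Hᴴ := continuous_id.matrix_conjTranspose
    exact isClosed_eq this continuous_id
  have h2 : ∀ v : Fin n → ℝ,
      IsClosed {H : Mat n | 0 ≤ v ⬝ᵥ ((Pᵀ * H * P) *ᵥ v)} := by
    intro v
    have hc : Continuous fun H : Mat n => v ⬝ᵥ ((Pᵀ * H * P) *ᵥ v) := by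
      exact (continuous_const.dotProduct
        (((continuous_const.matrix_mul continuous_id).matrix_mul
          continuous_const).matrix_mulVec continuous_const))
    exact isClosed_le continuous_const hc
  have : TanBound P d = {H : Mat n | H.IsHermitian} ∩
      ⋂ v ∈ {v : Fin n → ℝ | ∀ i, 0 < d i → v i = 0},
        {H : Mat n | 0 ≤ v ⬝ᵥ ((Pᵀ * H * P) *ᵥ v)} := by
    ext H
    simp only [TanBound, Set.mem_setOf_eq, Set.mem_inter_iff, Set.mem_iInter]
  rw [this]
  exact h1.inter (isClosed_biInter fun v _ => h2 v)

lemma dot_transpose {n : ℕ} (P : Mat n) (A : Mat n) (v : Fin n → ℝ) :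
    v ⬝ᵥ ((Pᵀ * A * P) *ᵥ v) = (P *ᵥ v) ⬝ᵥ (A *ᵥ (P *ᵥ v)) := by
  rw [Matrix.mul_assoc, ← Matrix.mulVec_mulVec, Matrix.dotProduct_mulVec,
    Matrix.vecMul_transpose, ← Matrix.mulVec_mulVec]

lemma tangent_sub {n : ℕ} {X P : Mat n} {d : Fin n → ℝ}
    (hXpsd : X.PosSemidef)
    (hXPdP : Pᵀ * X * P = Matrix.diagonal (fun i => max (d i) 0)) :
    TangentConeAt {A : Mat n | A.PosSemidef} X ⊆ TanBound P d := by
  apply closure_minimal _ (isClosed_tanBound P d)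
  rintro h ⟨t, ht, s, hs, rfl⟩
  constructor
  · have hsx : (s - X).IsHermitian := hs.1.sub hXpsd.1
    show (t • (s - X))ᴴ = t • (s - X)
    rw [Matrix.conjTranspose_smul, star_trivial, hsx.eq]
  · intro v hv
    have key : Pᵀ * (t • (s - X)) * P = t • (Pᵀ * s * P) - t • (Pᵀ * X * P) := by
      rw [Matrix.mul_smul, Matrix.smul_mul, Matrix.mul_sub, Matrix.sub_mul, smul_sub]
    rw [key]
    have e0 : v ⬝ᵥ ((Pᵀ * X * P) *ᵥ v) = 0 := by
      rw [hXPdP, qf_diag]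
      apply Finset.sum_eq_zero
      intro i _
      rcases le_or_gt (d i) 0 with h | h
      · rw [max_eq_right h, zero_mul]
      · rw [hv i h]; ring
    have e1 : 0 ≤ v ⬝ᵥ ((Pᵀ * s * P) *ᵥ v) := by
      rw [dot_transpose]
      simpa using hs.dotProduct_mulVec_nonneg (P *ᵥ v)
    rw [Matrix.sub_mulVec, dotProduct_sub, Matrix.smul_mulVec,
      Matrix.smul_mulVec, dotProduct_smul, dotProduct_smul,
      e0]
    simp only [smul_eq_mul, mul_zero, sub_zero]
    exact mul_nonneg ht.le e1

lemma conj_mul_conj {n : ℕ} {P : Mat n} (hP : Pᵀ * P = 1) (A B : Mat n) :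
    (P * A * Pᵀ) * (P * B * Pᵀ) = P * (A * B) * Pᵀ := by
  calc (P * A * Pᵀ) * (P * B * Pᵀ) = P * A * (Pᵀ * P) * (B * Pᵀ) := by noncomm_ring
    _ = P * (A * B) * Pᵀ := by rw [hP]; noncomm_ring

lemma psd_vecMulVec {n : ℕ} (u : Fin n → ℝ) : (Matrix.vecMulVec u u).PosSemidef := by
  have hmv : ∀ x : Fin n → ℝ, Matrix.vecMulVec u u *ᵥ x = (u ⬝ᵥ x) • u := by
    intro x; ext i
    simp only [Matrix.vecMulVec_apply, Matrix.mulVec, dotProduct, Pi.smul_apply,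
      smul_eq_mul]
    rw [Finset.sum_mul]
    exact Finset.sum_congr rfl fun k _ => by ring
  refine Matrix.PosSemidef.of_dotProduct_mulVec_nonneg ?_ ?_
  · show (Matrix.vecMulVec u u)ᴴ = Matrix.vecMulVec u u
    rw [conjT_eq_transpose]
    ext i j
    simp only [Matrix.transpose_apply, Matrix.vecMulVec_apply]
    ring
  · intro x
    rw [hmv]
    simp only [star_trivial, dotProduct_smul]
    rw [show x ⬝ᵥ u = u ⬝ᵥ x from dotProduct_comm x u]
    exact mul_self_nonneg _

lemma psd_conj {n : ℕ} {A : Mat n} (hA : A.PosSemidef) (P : Mat n) :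
    (P * A * Pᵀ).PosSemidef := by
  have := hA.mul_mul_conjTranspose_same P
  rwa [conjT_eq_transpose] at this

lemma vecMulVec_mem_crit {n : ℕ} {X Y P : Mat n} {d : Fin n → ℝ}
    (hX : X.PosSemidef) (hP : Pᵀ * P = 1)
    (hYeq : Y = P * Matrix.diagonal (fun i => min (d i) 0) * Pᵀ)
    (u : Fin n → ℝ) (hu : ∀ k, u k ≠ 0 → 0 ≤ d k) :
    P * Matrix.vecMulVec u u * Pᵀ ∈ CritSDP X Y := by
  set B : Mat n := P * Matrix.vecMulVec u u * Pᵀ with hB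
  have hBpsd : B.PosSemidef := psd_conj (psd_vecMulVec u) P
  constructor
  · apply subset_closure
    exact ⟨1, one_pos, X + B, hX.add hBpsd, by simp⟩
  · rw [hYeq, hB, conj_mul_conj hP, trace_conj' hP]
    rw [Matrix.trace]
    apply Finset.sum_eq_zero
    intro k _
    simp only [Matrix.diag_apply, Matrix.mul_diagonal, Matrix.vecMulVec_apply]
    rcases eq_or_ne (u k) 0 with h | h
    · rw [h]; ring
    · rw [min_eq_right (hu k h)]; ring

lemma transpose_std {n : ℕ} (i j : Fin n) (c : ℝ) :
    (Matrix.single i j c)ᵀ = Matrix.single j i c := by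
  ext a b
  simp only [Matrix.transpose_apply, Matrix.single, Matrix.of_apply]
  simp [and_comm]

lemma cross_mem_crit {n : ℕ} {X Y P : Mat n} {d : Fin n → ℝ}
    (hP : Pᵀ * P = 1)
    (hXeq : X = P * Matrix.diagonal (fun i => max (d i) 0) * Pᵀ)
    (hYeq : Y = P * Matrix.diagonal (fun i => min (d i) 0) * Pᵀ)
    {i j : Fin n} (hi : 0 < d i) (hj : d j < 0) :
    P * (Matrix.single i j 1 + Matrix.single j i 1) * Pᵀ ∈ CritSDP X Y := by
  have hij : i ≠ j := fun h => absurd (h ▸ hi) (not_lt.mpr hj.le)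
  set G' : Mat n := Matrix.single i j 1 + Matrix.single j i 1 with hG'
  set Z' : Mat n := Matrix.single j j 1 with hZ'
  constructor
  · -- tangent cone membership via closure
    have key : ∀ k : ℕ, P * (G' + (1/(k+1) : ℝ) • Z') * Pᵀ ∈
        {h : Mat n | ∃ t : ℝ, 0 < t ∧ ∃ s ∈ {A : Mat n | A.PosSemidef}, h = t • (s - X)} := by
      intro k
      set ε : ℝ := 1/(k+1) with hε
      have hεpos : 0 < ε := by positivity
      set t : ℝ := (k+1)/(d i) + 1 with ht
      have htpos : 0 < t := by positivity
      have htd : 1 ≤ t * d i * ε := by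
        rw [ht, hε]
        rw [add_mul, div_mul_cancel₀ _ (ne_of_gt hi), one_mul]
        rw [add_mul, one_div, mul_inv_cancel₀ (by positivity : (k+1:ℝ) ≠ 0)]
        nlinarith [mul_pos hi (show (0:ℝ) < ((k:ℝ)+1)⁻¹ by positivity)]
      set N : Mat n := Matrix.diagonal (fun l => max (d l) 0) + t⁻¹ • (G' + ε • Z') with hN
      have hNpsd : N.PosSemidef := by
        refine Matrix.PosSemidef.of_dotProduct_mulVec_nonneg ?_ ?_
        · show Nᴴ = N
          rw [conjT_eq_transpose, hN, Matrix.transpose_add, Matrix.transpose_smul,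
            Matrix.transpose_add, Matrix.transpose_smul, hG', hZ',
            Matrix.transpose_add, transpose_std, transpose_std, transpose_std,
            Matrix.diagonal_transpose]
          rw [add_comm (Matrix.single j i 1)]
        · intro x
          simp only [star_trivial]
          have expand : x ⬝ᵥ (N *ᵥ x) =
              (∑ l, max (d l) 0 * x l ^ 2) + t⁻¹ * (2 * (x i * x j) + ε * x j ^ 2) := by
            rw [hN, Matrix.add_mulVec, dotProduct_add, qf_diag]
            congr 1
            rw [Matrix.smul_mulVec, dotProduct_smul, smul_eq_mul]
            congr 1
            rw [hG', Matrix.add_mulVec, Matrix.add_mulVec, dotProduct_add,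
              dotProduct_add, qf_std, qf_std, Matrix.smul_mulVec,
              dotProduct_smul, qf_std]
            simp only [smul_eq_mul]
            ring
          rw [expand]
          have hsum : max (d i) 0 * x i ^ 2 ≤ ∑ l, max (d l) 0 * x l ^ 2 := by
            apply Finset.single_le_sum (f := fun l => max (d l) 0 * x l ^ 2)
            · intro l _
              have : 0 ≤ max (d l) 0 := le_max_right _ _
              positivity
            · exact Finset.mem_univ i
          have hmax : max (d i) 0 = d i := max_eq_left hi.le
          rw [hmax] at hsum
          have hinv : 0 < t⁻¹ := by positivity
          have hae : t⁻¹ ≤ d i * ε := by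
            have h1 := mul_le_mul_of_nonneg_left htd (le_of_lt hinv)
            rw [mul_one] at h1
            calc t⁻¹ ≤ t⁻¹ * (t * d i * ε) := h1
              _ = (t⁻¹ * t) * (d i * ε) := by ring
              _ = d i * ε := by rw [inv_mul_cancel₀ (ne_of_gt htpos), one_mul]
          have key2 : 0 ≤ d i * x i ^ 2 + t⁻¹ * (2 * (x i * x j) + ε * x j ^ 2) := by
            nlinarith [sq_nonneg (d i * x i + t⁻¹ * x j),
              mul_le_mul_of_nonneg_left hae hinv.le, hi, hinv, sq_nonneg (x j)]
          linarith
      refine ⟨t, htpos, P * N * Pᵀ, psd_conj hNpsd P, ?_⟩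
      have hdiff : P * N * Pᵀ - X = t⁻¹ • (P * (G' + ε • Z') * Pᵀ) := by
        rw [hXeq, hN, Matrix.mul_add, Matrix.add_mul, add_sub_cancel_left,
          Matrix.mul_smul, Matrix.smul_mul]
      rw [hdiff, smul_smul, mul_inv_cancel₀ (ne_of_gt htpos), one_smul]
    -- now the limit
    have htend : Tendsto (fun k : ℕ => P * (G' + (1/(k+1) : ℝ) • Z') * Pᵀ) atTop
        (𝓝 (P * G' * Pᵀ)) := by
      have h0 : Tendsto (fun k : ℕ => (1/(k+1) : ℝ)) atTop (𝓝 0) :=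
        tendsto_one_div_add_atTop_nhds_zero_nat
      have h1 : Tendsto (fun k : ℕ => (1/(k+1) : ℝ) • (P * Z' * Pᵀ)) atTop
          (𝓝 ((0:ℝ) • (P * Z' * Pᵀ))) := h0.smul_const _
      rw [zero_smul] at h1
      have h2 := (tendsto_const_nhds (x := P * G' * Pᵀ) (f := atTop)).add h1
      rw [add_zero] at h2
      convert h2 using 2 with k
      rw [Matrix.mul_add, Matrix.add_mul, Matrix.mul_smul, Matrix.smul_mul]
    exact mem_closure_of_tendsto htend (Filter.Eventually.of_forall key)
  · -- trace condition
    rw [hYeq, conj_mul_conj hP, trace_conj' hP, Matrix.trace]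
    apply Finset.sum_eq_zero
    intro k _
    simp only [Matrix.diag_apply, Matrix.mul_diagonal, hG', Matrix.add_apply,
      Matrix.single, Matrix.of_apply]
    by_cases h1 : i = k
    · subst h1
      simp [Ne.symm hij, hij]
    · simp [h1]

lemma conj_back {n : ℕ} {P : Mat n} (hP : Pᵀ * P = 1) (hPPt : P * Pᵀ = 1) (A : Mat n) :
    Pᵀ * (P * A * Pᵀ) * P = A := by
  calc Pᵀ * (P * A * Pᵀ) * P = (Pᵀ * P) * A * (Pᵀ * P) := by noncomm_ring
    _ = A := by rw [hP]; simp

lemma conj_back' {n : ℕ} {P : Mat n} (hPPt : P * Pᵀ = 1) (A : Mat n) :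
    P * (Pᵀ * A * P) * Pᵀ = A := by
  calc P * (Pᵀ * A * P) * Pᵀ = (P * Pᵀ) * A * (P * Pᵀ) := by noncomm_ring
    _ = A := by rw [hPPt]; simp

lemma qf_cross {n : ℕ} (M : Mat n) (i j : Fin n) :
    (Pi.single i 1 : Fin n → ℝ) ⬝ᵥ (M *ᵥ Pi.single j 1) = M i j := by
  rw [Matrix.mulVec_single, single_dotProduct]
  simp

lemma qf_pair {n : ℕ} (M : Mat n) (i j : Fin n) (c : ℝ) :
    (((Pi.single i 1 : Fin n → ℝ) + c • (Pi.single j 1 : Fin n → ℝ))) ⬝ᵥ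
      (M *ᵥ (((Pi.single i 1 : Fin n → ℝ) + c • (Pi.single j 1 : Fin n → ℝ)))) =
      M i i + c * (M i j + M j i) + c ^ 2 * M j j := by
  rw [Matrix.mulVec_add, Matrix.mulVec_smul, dotProduct_add,
    add_dotProduct, add_dotProduct, dotProduct_smul,
    dotProduct_smul, smul_dotProduct, smul_dotProduct,
    qf_single, qf_single, qf_cross, qf_cross]
  simp only [smul_eq_mul]
  ring

lemma trace_formula {n : ℕ} {P Y : Mat n} {d : Fin n → ℝ} (hP : Pᵀ * P = 1)
    (hPPt : P * Pᵀ = 1)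
    (hYeq : Y = P * Matrix.diagonal (fun i => min (d i) 0) * Pᵀ) (H : Mat n) :
    (H * Y).trace = ∑ i, (Pᵀ * H * P) i i * min (d i) 0 := by
  have e : H * Y = P * ((Pᵀ * H * P) * Matrix.diagonal (fun i => min (d i) 0)) * Pᵀ := by
    rw [hYeq]
    rw [← conj_mul_conj hP (Pᵀ * H * P) (Matrix.diagonal (fun i => min (d i) 0))]
    rw [conj_back' hPPt]
  rw [e, trace_conj' hP, Matrix.trace]
  exact Finset.sum_congr rfl fun i _ => by
    simp [Matrix.diag_apply, Matrix.mul_diagonal]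

lemma crit_mem_cond {n : ℕ} {X Y P : Mat n} {d : Fin n → ℝ}
    (hX : X.PosSemidef) (hP : Pᵀ * P = 1) (hPPt : P * Pᵀ = 1)
    (hXPdP : Pᵀ * X * P = Matrix.diagonal (fun i => max (d i) 0))
    (hYeq : Y = P * Matrix.diagonal (fun i => min (d i) 0) * Pᵀ)
    {K : Mat n} (hK : K ∈ CritSDP X Y) :
    K.IsHermitian ∧ ∀ i j : Fin n, d i ≤ 0 → d j < 0 → (Pᵀ * K * P) i j = 0 := by
  obtain ⟨htan, htr⟩ := hK
  obtain ⟨herm, hq⟩ := tangent_sub hX hXPdP htan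
  set M : Mat n := Pᵀ * K * P with hM
  have hKt : Kᵀ = K := by rw [← conjT_eq_transpose]; exact herm.eq
  have hMt : ∀ a b, M b a = M a b := by
    intro a b
    have h2 : (Pᵀ * K * P)ᵀ = Pᵀ * K * P := by
      rw [Matrix.transpose_mul, Matrix.transpose_mul, Matrix.transpose_transpose,
        hKt, ← Matrix.mul_assoc]
    calc M b a = (Pᵀ * K * P)ᵀ a b := rfl
      _ = (Pᵀ * K * P) a b := by rw [h2]
      _ = M a b := rfl
  have hdiag : ∀ i, d i < 0 → 0 ≤ M i i := by
    intro i hi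
    have hsupp : ∀ l, 0 < d l → (Pi.single i 1 : Fin n → ℝ) l = 0 := by
      intro l hl
      have : l ≠ i := fun h => absurd (h ▸ hl) (not_lt.mpr hi.le)
      exact Pi.single_eq_of_ne this 1
    have := hq (Pi.single i 1) hsupp
    rwa [qf_single] at this
  have hdiag0 : ∀ i, d i < 0 → M i i = 0 := by
    intro i hi
    have hform : ∑ l, M l l * min (d l) 0 = 0 := by
      rw [← trace_formula hP hPPt hYeq K, htr]
    have hnp : ∀ l ∈ Finset.univ, M l l * min (d l) 0 ≤ 0 := by
      intro l _
      rcases lt_or_ge (d l) 0 with h | h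
      · rw [min_eq_left h.le]
        exact mul_nonpos_of_nonneg_of_nonpos (hdiag l h) h.le
      · rw [min_eq_right h]; rw [mul_zero]
    have := (Finset.sum_eq_zero_iff_of_nonpos hnp).mp hform i (Finset.mem_univ i)
    rw [min_eq_left hi.le] at this
    exact (mul_eq_zero.mp this).resolve_right (ne_of_lt hi)
  refine ⟨herm, fun i j hi hj => ?_⟩
  rcases eq_or_ne i j with rfl | hij
  · exact hdiag0 i hj
  by_contra hne
  have hqc : ∀ c : ℝ, 0 ≤ M i i + c * (2 * M i j) := by
    intro c
    have hsupp : ∀ l, 0 < d l →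
        (((Pi.single i 1 : Fin n → ℝ) + c • (Pi.single j 1 : Fin n → ℝ))) l = 0 := by
      intro l hl
      have h1 : l ≠ i := fun h => absurd (h ▸ hl) (not_lt.mpr hi)
      have h2 : l ≠ j := fun h => absurd (h ▸ hl) (not_lt.mpr hj.le)
      simp [Pi.single_eq_of_ne h1, Pi.single_eq_of_ne h2]
    have := hq _ hsupp
    rw [qf_pair] at this
    rw [hdiag0 j hj, hMt i j] at this
    calc (0:ℝ) ≤ M i i + c * (M i j + M i j) + c ^ 2 * 0 := this
      _ = M i i + c * (2 * M i j) := by ring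
  have := hqc (-(M i i + 1) / (2 * M i j))
  have h2 : (2 : ℝ) * M i j ≠ 0 := by
    intro h; exact hne (by linarith [mul_eq_zero.mp h])
  rw [div_mul_cancel₀ _ h2] at this
  linarith

lemma pair_iden {n : ℕ} (i j : Fin n) :
    Matrix.single i j (1:ℝ) + Matrix.single j i 1 =
      Matrix.vecMulVec ((Pi.single i 1 : Fin n → ℝ) + (Pi.single j 1 : Fin n → ℝ))
          ((Pi.single i 1 : Fin n → ℝ) + (Pi.single j 1 : Fin n → ℝ)) -
        Matrix.vecMulVec (Pi.single i 1) (Pi.single i 1) -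
        Matrix.vecMulVec (Pi.single j 1) (Pi.single j 1) := by
  ext a b
  simp only [Matrix.add_apply, Matrix.sub_apply, Matrix.vecMulVec_apply,
    Matrix.single, Matrix.of_apply, Pi.add_apply, Pi.single_apply]
  by_cases h1 : a = i <;> by_cases h2 : a = j <;> by_cases h3 : b = i <;>
    by_cases h4 : b = j <;>
    simp_all [eq_comm] <;> ring

lemma pair_mem_span {n : ℕ} {X Y P : Mat n} {d : Fin n → ℝ}
    (hX : X.PosSemidef) (hP : Pᵀ * P = 1)
    (hXeq : X = P * Matrix.diagonal (fun i => max (d i) 0) * Pᵀ)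
    (hYeq : Y = P * Matrix.diagonal (fun i => min (d i) 0) * Pᵀ)
    {i j : Fin n}
    (hcase : (0 ≤ d i ∧ 0 ≤ d j) ∨ (0 < d i ∧ d j < 0) ∨ (d i < 0 ∧ 0 < d j)) :
    P * (Matrix.single i j 1 + Matrix.single j i 1) * Pᵀ ∈
      Submodule.span ℝ (CritSDP X Y) := by
  rcases hcase with ⟨hi, hj⟩ | ⟨hi, hj⟩ | ⟨hi, hj⟩
  · -- both nonnegative
    have hu : ∀ k, ((Pi.single i 1 : Fin n → ℝ) + (Pi.single j 1 : Fin n → ℝ)) k ≠ 0 → 0 ≤ d k := by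
      intro k hk
      by_cases h1 : k = i
      · exact h1 ▸ hi
      by_cases h2 : k = j
      · exact h2 ▸ hj
      exact absurd (by simp [Pi.single_eq_of_ne h1, Pi.single_eq_of_ne h2]) hk
    have hsi : ∀ k, (Pi.single i 1 : Fin n → ℝ) k ≠ 0 → 0 ≤ d k := by
      intro k hk
      by_cases h1 : k = i
      · exact h1 ▸ hi
      · exact absurd (Pi.single_eq_of_ne h1 1) hk
    have hsj : ∀ k, (Pi.single j 1 : Fin n → ℝ) k ≠ 0 → 0 ≤ d k := by
      intro k hk
      by_cases h1 : k = j
      · exact h1 ▸ hj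
      · exact absurd (Pi.single_eq_of_ne h1 1) hk
    have e : P * (Matrix.single i j 1 + Matrix.single j i 1) * Pᵀ =
        P * Matrix.vecMulVec ((Pi.single i 1 : Fin n → ℝ) + (Pi.single j 1 : Fin n → ℝ))
            ((Pi.single i 1 : Fin n → ℝ) + (Pi.single j 1 : Fin n → ℝ)) * Pᵀ -
          P * Matrix.vecMulVec (Pi.single i 1) (Pi.single i 1) * Pᵀ -
          P * Matrix.vecMulVec (Pi.single j 1) (Pi.single j 1) * Pᵀ := by
      rw [pair_iden i j, Matrix.mul_sub, Matrix.mul_sub, Matrix.sub_mul, Matrix.sub_mul]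
    rw [e]
    exact sub_mem (sub_mem
      (Submodule.subset_span (vecMulVec_mem_crit hX hP hYeq _ hu))
      (Submodule.subset_span (vecMulVec_mem_crit hX hP hYeq _ hsi)))
      (Submodule.subset_span (vecMulVec_mem_crit hX hP hYeq _ hsj))
  · exact Submodule.subset_span (cross_mem_crit hP hXeq hYeq hi hj)
  · rw [add_comm (Matrix.single i j 1)]
    exact Submodule.subset_span (cross_mem_crit hP hXeq hYeq hj hi)

lemma rhs_mem_span {n : ℕ} {X Y P : Mat n} {d : Fin n → ℝ}
    (hX : X.PosSemidef) (hP : Pᵀ * P = 1) (hPPt : P * Pᵀ = 1)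
    (hXeq : X = P * Matrix.diagonal (fun i => max (d i) 0) * Pᵀ)
    (hYeq : Y = P * Matrix.diagonal (fun i => min (d i) 0) * Pᵀ)
    {H : Mat n} (herm : H.IsHermitian)
    (hcond : ∀ i j : Fin n, ((d i = 0 ∧ d j < 0) ∨ (d i < 0 ∧ d j < 0)) →
      (Pᵀ * H * P) i j = 0) :
    H ∈ Submodule.span ℝ (CritSDP X Y) := by
  set M : Mat n := Pᵀ * H * P with hM
  have hHt : Hᵀ = H := by rw [← conjT_eq_transpose]; exact herm.eq
  have hMt : Mᵀ = M := by
    rw [hM, Matrix.transpose_mul, Matrix.transpose_mul, Matrix.transpose_transpose,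
      hHt, ← Matrix.mul_assoc]
  have hMsym : ∀ a b, M b a = M a b := by
    intro a b
    calc M b a = Mᵀ a b := rfl
      _ = M a b := by rw [hMt]
  have keysum : (2:ℝ) • H =
      ∑ i, ∑ j, M i j • (P * (Matrix.single i j 1 + Matrix.single j i 1) * Pᵀ) := by
    have h1 : ∑ i, ∑ j, M i j • Matrix.single i j (1:ℝ) = M := by
      conv_rhs => rw [Matrix.matrix_eq_sum_single M]
      refine Finset.sum_congr rfl fun i _ => Finset.sum_congr rfl fun j _ => ?_
      rw [Matrix.smul_single, smul_eq_mul, mul_one]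
    have h2 : ∑ i, ∑ j, M i j • Matrix.single j i (1:ℝ) = Mᵀ := by
      rw [Finset.sum_comm]
      conv_rhs => rw [Matrix.matrix_eq_sum_single Mᵀ]
      refine Finset.sum_congr rfl fun j _ => Finset.sum_congr rfl fun i _ => ?_
      rw [Matrix.smul_single, smul_eq_mul, mul_one, Matrix.transpose_apply]
    have e1 : ∑ i, ∑ j, M i j •
        (Matrix.single i j (1:ℝ) + Matrix.single j i 1) = M + Mᵀ := by
      simp only [smul_add, Finset.sum_add_distrib]
      rw [h1, h2]
    calc (2:ℝ) • H = P * ((2:ℝ) • M) * Pᵀ := by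
          rw [Matrix.mul_smul, Matrix.smul_mul, conj_back' hPPt]
      _ = P * (M + Mᵀ) * Pᵀ := by rw [hMt, two_smul]
      _ = P * (∑ i, ∑ j, M i j •
            (Matrix.single i j (1:ℝ) + Matrix.single j i 1)) * Pᵀ := by
          rw [e1]
      _ = ∑ i, ∑ j, M i j •
            (P * (Matrix.single i j 1 + Matrix.single j i 1) * Pᵀ) := by
          rw [Finset.mul_sum, Finset.sum_mul]
          refine Finset.sum_congr rfl fun i _ => ?_
          rw [Finset.mul_sum, Finset.sum_mul]
          refine Finset.sum_congr rfl fun j _ => ?_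
          rw [Matrix.mul_smul, Matrix.smul_mul]
  have hsummem : (2:ℝ) • H ∈ Submodule.span ℝ (CritSDP X Y) := by
    rw [keysum]
    refine Submodule.sum_mem _ fun i _ => Submodule.sum_mem _ fun j _ => ?_
    by_cases hz : M i j = 0
    · rw [hz, zero_smul]; exact Submodule.zero_mem _
    refine Submodule.smul_mem _ _ (pair_mem_span hX hP hXeq hYeq ?_)
    rcases lt_trichotomy (d i) 0 with hi | hi | hi
    · rcases lt_trichotomy (d j) 0 with hj | hj | hj
      · exact absurd (hcond i j (Or.inr ⟨hi, hj⟩)) hz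
      · exact absurd ((hMsym i j).symm.trans (hcond j i (Or.inl ⟨hj, hi⟩))) hz
      · exact Or.inr (Or.inr ⟨hi, hj⟩)
    · rcases lt_trichotomy (d j) 0 with hj | hj | hj
      · exact absurd (hcond i j (Or.inl ⟨hi, hj⟩)) hz
      · exact Or.inl ⟨hi.ge, hj.ge⟩
      · exact Or.inl ⟨hi.ge, hj.le⟩
    · rcases lt_trichotomy (d j) 0 with hj | hj | hj
      · exact Or.inr (Or.inl ⟨hi, hj⟩)
      · exact Or.inl ⟨hi.le, hj.ge⟩
      · exact Or.inl ⟨hi.le, hj.le⟩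
  have : H = (2:ℝ)⁻¹ • ((2:ℝ) • H) := by
    rw [smul_smul]; norm_num
  rw [this]
  exact Submodule.smul_mem _ _ hsummem

theorem statement16 {n : ℕ} (X Y : Mat n)
    (hX : X.PosSemidef) (hY : (-Y).PosSemidef) (hXY : (X * Y).trace = 0)
    (P : Mat n) (hP : Pᵀ * P = 1)
    (d : Fin n → ℝ) (hd : Antitone d)
    (hdec : X + Y = P * Matrix.diagonal d * Pᵀ) :
    ((affineSpan ℝ (CritSDP X Y) : AffineSubspace ℝ (Mat n)) : Set (Mat n)) =
      {H : Mat n | H.IsHermitian ∧ ∀ i j : Fin n,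
        ((d i = 0 ∧ d j < 0) ∨ (d i < 0 ∧ d j < 0)) → (Pᵀ * H * P) i j = 0} := by
  have hPPt : P * Pᵀ = 1 := mul_eq_one_comm.mp hP
  obtain ⟨hXeq, hYeq⟩ := decomp hX hY hXY hP hdec
  have hXPdP : Pᵀ * X * P = Matrix.diagonal (fun i => max (d i) 0) := by
    rw [hXeq, conj_back hP hPPt]
  have h0mem : (0 : Mat n) ∈ CritSDP X Y := by
    refine ⟨subset_closure ⟨1, one_pos, X, hX, by simp⟩, by simp⟩
  set Ssub : Submodule ℝ (Mat n) :=
    { carrier := {H : Mat n | H.IsHermitian ∧ ∀ i j : Fin n,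
        ((d i = 0 ∧ d j < 0) ∨ (d i < 0 ∧ d j < 0)) → (Pᵀ * H * P) i j = 0}
      add_mem' := by
        rintro A B ⟨hA1, hA2⟩ ⟨hB1, hB2⟩
        refine ⟨hA1.add hB1, fun i j hc => ?_⟩
        rw [Matrix.mul_add, Matrix.add_mul, Matrix.add_apply, hA2 i j hc, hB2 i j hc,
          add_zero]
      zero_mem' := by
        refine ⟨Matrix.isHermitian_zero, fun i j _ => ?_⟩
        rw [Matrix.mul_zero, Matrix.zero_mul]
        rfl
      smul_mem' := by
        rintro c A ⟨hA1, hA2⟩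
        constructor
        · show (c • A)ᴴ = c • A
          rw [Matrix.conjTranspose_smul, star_trivial, hA1.eq]
        · intro i j hc
          rw [Matrix.mul_smul, Matrix.smul_mul, Matrix.smul_apply, hA2 i j hc,
            smul_zero] } with hSsub
  ext H
  constructor
  · -- affine span ⊆ target
    intro hH
    have hsub : CritSDP X Y ⊆ (Ssub.toAffineSubspace : Set (Mat n)) := by
      intro K hK
      obtain ⟨herm, hcond⟩ := crit_mem_cond hX hP hPPt hXPdP hYeq hK
      rw [SetLike.mem_coe, Submodule.mem_toAffineSubspace]
      refine ⟨herm, fun i j hc => ?_⟩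
      rcases hc with ⟨h1, h2⟩ | ⟨h1, h2⟩
      · exact hcond i j h1.le h2
      · exact hcond i j h1.le h2
    have hle := affineSpan_le.mpr hsub
    have h1 : H ∈ Ssub.toAffineSubspace := hle hH
    exact Submodule.mem_toAffineSubspace.mp h1
  · -- target ⊆ affine span
    rintro ⟨herm, hcond⟩
    have hspan : H ∈ Submodule.span ℝ (CritSDP X Y) :=
      rhs_mem_span hX hP hPPt hXeq hYeq herm hcond
    have hdir : Submodule.span ℝ (CritSDP X Y) ≤
        (affineSpan ℝ (CritSDP X Y)).direction := by
      rw [Submodule.span_le]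
      intro c hc
      have h1 := AffineSubspace.vsub_mem_direction
        (subset_affineSpan ℝ _ hc) (subset_affineSpan ℝ _ h0mem)
      simpa using h1
    have h2 := AffineSubspace.vadd_mem_of_mem_direction (hdir hspan)
      (subset_affineSpan ℝ (CritSDP X Y) h0mem)
    simpa using h2

end
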